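/- Let (S,h) be an admissible 4-polarized lattice and Γ ⊆ root₁(S,h) a set with no separating roots, and let c₁,c₂,c₃ ∈ Γ be a triangle. Then for each i ∈ {1,2,3}, every connected component of sec_i, regarded as a simple graph in which distinct u,v are adjacent iff ⟨u,v⟩ = 1, is isomorphic to a single vertex, a single edge, a path on three vertices, or a 3-cycle (i.e., sec_i is a triangular set: all its components are of Dynkin types A₁, A₂, A₃ or affine type Ã₂). -/

import Mathlib

/-!
Common definitions: 4-polarized lattices, lines, roots, Fano graphs
(following Degtyarev–Rams, "Counting lines with Vinberg's algorithm").
-/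

namespace K3

variable {S : Type*} [AddCommGroup S] [Module ℤ S]

/-- `root₁(S,h)`: the *lines* of a 4-polarized lattice. -/
def root1 (B : S →ₗ[ℤ] S →ₗ[ℤ] ℤ) (h : S) : Set S :=
  {l : S | B l l = -2 ∧ B l h = 1}

/-- `root₀(S,h)`: the *roots* of a 4-polarized lattice. -/
def root0 (B : S →ₗ[ℤ] S →ₗ[ℤ] ℤ) (h : S) : Set S :=
  {r : S | B r r = -2 ∧ B r h = 0}

/-- `(S,B,h)` is a 4-polarized lattice: `S` is a finitely generated free ℤ-module, `B`
a symmetric bilinear form, `⟨h,h⟩ = 4`, and `⟨v,v⟩ < 0` for nonzero `v ⊥ h`. -/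
structure IsPolarized (B : S →ₗ[ℤ] S →ₗ[ℤ] ℤ) (h : S) : Prop where
  free : Module.Free ℤ S
  finite : Module.Finite ℤ S
  symm : ∀ u v : S, B u v = B v u
  deg : B h h = 4
  hyperbolic : ∀ v : S, v ≠ 0 → B v h = 0 → B v v < 0

/-- Admissibility: there is no `u` with `⟨u,u⟩ = 0` and `⟨u,h⟩ = 2`. -/
def IsAdmissible (B : S →ₗ[ℤ] S →ₗ[ℤ] ℤ) (h : S) : Prop :=
  ¬ ∃ u : S, B u u = 0 ∧ B u h = 2

/-- The E₈ Cartan matrix (Bourbaki numbering of the Dynkin diagram). -/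
def e8Cartan : Matrix (Fin 8) (Fin 8) ℤ :=
  !![2,0,-1,0,0,0,0,0;
     0,2,0,-1,0,0,0,0;
     -1,0,2,-1,0,0,0,0;
     0,-1,-1,2,-1,0,0,0;
     0,0,0,-1,2,-1,0,0;
     0,0,0,0,-1,2,-1,0;
     0,0,0,0,0,-1,2,-1;
     0,0,0,0,0,0,-1,2]

/-- The Gram matrix of `L := E₈ ⊕ E₈ ⊕ U ⊕ U ⊕ U`, where `E₈` is *negative* definite
(Gram matrix the negative of the E₈ Cartan matrix) and `U` has Gram matrix `[[0,1],[1,0]]`. -/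
def LGram : Matrix (Fin 22) (Fin 22) ℤ := fun i j =>
  if hi : (i : ℕ) < 8 then
    (if hj : (j : ℕ) < 8 then -e8Cartan ⟨i, hi⟩ ⟨j, hj⟩ else 0)
  else if hi' : (i : ℕ) < 16 then
    (if hj' : 8 ≤ (j : ℕ) ∧ (j : ℕ) < 16 then
      -e8Cartan ⟨(i : ℕ) - 8, by omega⟩ ⟨(j : ℕ) - 8, by omega⟩ else 0)
  else
    (if 16 ≤ (j : ℕ) ∧ (i : ℕ) / 2 = (j : ℕ) / 2 ∧ i ≠ j then 1 else 0)

/-- A geometric 4-polarized lattice: admissible, even, and admitting a primitive isometric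
embedding into `L = 2E₈ ⊕ 3U` (primitive = the quotient by the image is torsion-free). -/
structure IsGeometric (B : S →ₗ[ℤ] S →ₗ[ℤ] ℤ) (h : S) extends IsPolarized B h : Prop where
  admissible : IsAdmissible B h
  even : ∀ v : S, Even (B v v)
  embeds : ∃ f : S →ₗ[ℤ] (Fin 22 → ℤ), Function.Injective f ∧
    (∀ u v : S, B u v = ∑ i, ∑ j, f u i * LGram i j * f v j) ∧
    (∀ (x : Fin 22 → ℤ) (n : ℤ), n ≠ 0 → n • x ∈ LinearMap.range f →
      x ∈ LinearMap.range f)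

/-- A ℤ-linear functional is *Weyl-generic* if it does not vanish on any root. -/
def WeylGeneric (B : S →ₗ[ℤ] S →ₗ[ℤ] ℤ) (h : S) (φ : S →ₗ[ℤ] ℤ) : Prop :=
  ∀ r ∈ root0 B h, φ r ≠ 0

/-- The vertex set of the Fano graph `Fn_φ(S,h)`. -/
def fanoVerts (B : S →ₗ[ℤ] S →ₗ[ℤ] ℤ) (h : S) (φ : S →ₗ[ℤ] ℤ) : Set S :=
  {l ∈ root1 B h | ∀ r ∈ root0 B h, 0 < φ r → 0 ≤ B l r}

/-- The set `Γ` together with `h` spans `S ⊗ ℚ`; since `S` is free, this is equivalent to: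
every `s : S` has a nonzero integer multiple in the ℤ-span of `Γ ∪ {h}`. -/
def QSpannedByLines (Γ : Set S) (h : S) : Prop :=
  ∀ s : S, ∃ n : ℤ, n ≠ 0 ∧ n • s ∈ Submodule.span ℤ (Γ ∪ {h})

/-- The Fano graph as a simple graph on `Γ`: distinct `u, v` adjacent iff `⟨u,v⟩ = 1`. -/
def fanoGraph (B : S →ₗ[ℤ] S →ₗ[ℤ] ℤ) (Γ : Set S) : SimpleGraph Γ where
  Adj u v := u ≠ v ∧ B u.1 v.1 = 1 ∧ B v.1 u.1 = 1
  symm := by refine ⟨?_⟩; intro u v hadj; exact ⟨hadj.1.symm, hadj.2.2, hadj.2.1⟩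
  loopless := by refine ⟨?_⟩; intro u hadj; exact hadj.1 rfl

/-- `Γ` has no separating roots: no root is positive on one element of `Γ` and negative
on another. -/
def NoSeparatingRoots (B : S →ₗ[ℤ] S →ₗ[ℤ] ℤ) (h : S) (Γ : Set S) : Prop :=
  ¬ ∃ r ∈ root0 B h, ∃ u ∈ Γ, ∃ v ∈ Γ, 0 < B r u ∧ B r v < 0

/-- A triangle in a set `Γ` of lines: three distinct elements pairwise of product `1`. -/
def IsTriangle (B : S →ₗ[ℤ] S →ₗ[ℤ] ℤ) (Γ : Set S) (c₁ c₂ c₃ : S) : Prop :=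
  c₁ ∈ Γ ∧ c₂ ∈ Γ ∧ c₃ ∈ Γ ∧ c₁ ≠ c₂ ∧ c₁ ≠ c₃ ∧ c₂ ≠ c₃ ∧
    B c₁ c₂ = 1 ∧ B c₁ c₃ = 1 ∧ B c₂ c₃ = 1

/-- Simple sections through `a` of the triangle `(a,b,c)`:
`sec a := {l ∈ Γ : ⟨l,a⟩ = 1, ⟨l,b⟩ = ⟨l,c⟩ = 0}`. -/
def sec (B : S →ₗ[ℤ] S →ₗ[ℤ] ℤ) (Γ : Set S) (a b c : S) : Set S :=
  {l ∈ Γ | B l a = 1 ∧ B l b = 0 ∧ B l c = 0}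

/-- The pencil of a triangle `(c₁,c₂,c₃)` in `Γ`. -/
def pencil (B : S →ₗ[ℤ] S →ₗ[ℤ] ℤ) (Γ : Set S) (c₁ c₂ c₃ : S) : Set S :=
  {c₁, c₂, c₃} ∪ {l ∈ Γ | B l c₁ = 0 ∧ B l c₂ = 0 ∧ B l c₃ = 0}

end K3

namespace K3

/-- `X` is a *triangular set* for the adjacency relation "`⟨u,v⟩ = 1`": every connected
component of `X` is of type `A₁` (vertex), `A₂` (edge), `A₃` (path on three vertices) or
`Ã₂` (3-cycle).  For a simple graph this holds if and only if (1) no vertex has three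
distinct neighbours in `X`, and (2) there is no chain of four distinct vertices
`v₁ ~ v₂ ~ v₃ ~ v₄` in `X`; indeed, a connected graph of maximal degree ≤ 2 is a path or a
cycle, and condition (2) cuts these down to paths on ≤ 3 vertices and 3-cycles. -/
def IsTriangularSet {S : Type*} [AddCommGroup S] [Module ℤ S]
    (B : S →ₗ[ℤ] S →ₗ[ℤ] ℤ) (X : Set S) : Prop :=
  (∀ v ∈ X, ¬ ∃ u₁ ∈ X, ∃ u₂ ∈ X, ∃ u₃ ∈ X, u₁ ≠ u₂ ∧ u₁ ≠ u₃ ∧ u₂ ≠ u₃ ∧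
      B v u₁ = 1 ∧ B v u₂ = 1 ∧ B v u₃ = 1) ∧
  ¬ ∃ v₁ ∈ X, ∃ v₂ ∈ X, ∃ v₃ ∈ X, ∃ v₄ ∈ X,
      v₁ ≠ v₂ ∧ v₁ ≠ v₃ ∧ v₁ ≠ v₄ ∧ v₂ ≠ v₃ ∧ v₂ ≠ v₄ ∧ v₃ ≠ v₄ ∧
      B v₁ v₂ = 1 ∧ B v₂ v₃ = 1 ∧ B v₃ v₄ = 1


section Aux

variable {S : Type*} [AddCommGroup S] [Module ℤ S]

private lemma expandL (B : S →ₗ[ℤ] S →ₗ[ℤ] ℤ) (h a x y z t : S) :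
    B (-h + a + x + y + z) t = -B h t + B a t + B x t + B y t + B z t := by
  simp [map_add, LinearMap.add_apply, LinearMap.neg_apply]

private lemma expandR (B : S →ₗ[ℤ] S →ₗ[ℤ] ℤ) (h a x y z s : S) :
    B s (-h + a + x + y + z) = -B s h + B s a + B s x + B s y + B s z := by
  simp [map_add, map_neg]

/-- Distinct lines in `Γ` pair nonnegatively. -/
private lemma prod_nonneg {B : S →ₗ[ℤ] S →ₗ[ℤ] ℤ} {h : S} (hpol : IsPolarized B h)
    {Γ : Set S} (hΓ : Γ ⊆ root1 B h) (hsep : NoSeparatingRoots B h Γ)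
    {u v : S} (hu : u ∈ Γ) (hv : v ∈ Γ) (hne : u ≠ v) : 0 ≤ B u v := by
  obtain ⟨huu, huh⟩ := hΓ hu
  obtain ⟨hvv, hvh⟩ := hΓ hv
  by_contra hneg
  push_neg at hneg
  have hsym := hpol.symm v u
  have hrh : B (u - v) h = 0 := by
    simp only [map_sub, LinearMap.sub_apply]; omega
  have hrr : B (u - v) (u - v) = -4 - 2 * B u v := by
    simp only [map_sub, LinearMap.sub_apply]; omega
  have hlt := hpol.hyperbolic _ (sub_ne_zero.mpr hne) hrh
  rw [hrr] at hlt
  have h1 : B u v = -1 := by omega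
  apply hsep
  refine ⟨u - v, ⟨by omega, hrh⟩, v, hv, u, hu, ?_, ?_⟩
  · simp only [map_sub, LinearMap.sub_apply]; omega
  · simp only [map_sub, LinearMap.sub_apply]; omega

/-- The key combinatorial lemma: a set of lines pairing to `1` with a fixed line `a`
is triangular. -/
private lemma triangular_aux {B : S →ₗ[ℤ] S →ₗ[ℤ] ℤ} {h : S} (hpol : IsPolarized B h)
    {Γ : Set S} (hΓ : Γ ⊆ root1 B h) (hsep : NoSeparatingRoots B h Γ)
    {a : S} (haa : B a a = -2) (hah : B a h = 1)
    {X : Set S} (hXΓ : X ⊆ Γ) (hXa : ∀ l ∈ X, B l a = 1) :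
    IsTriangularSet B X := by
  have hsym := hpol.symm
  have hdeg := hpol.deg
  have hha : B h a = 1 := (hsym h a).trans hah
  constructor
  · rintro v hv ⟨u₁, hu₁, u₂, hu₂, u₃, hu₃, h12, h13, h23, e1, e2, e3⟩
    obtain ⟨hvv, hvh⟩ := hΓ (hXΓ hv)
    obtain ⟨h11, h1h⟩ := hΓ (hXΓ hu₁)
    obtain ⟨h22, h2h⟩ := hΓ (hXΓ hu₂)
    obtain ⟨h33, h3h⟩ := hΓ (hXΓ hu₃)
    have hhv : B h v = 1 := (hsym h v).trans hvh
    have hh1 : B h u₁ = 1 := (hsym h u₁).trans h1h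
    have hh2 : B h u₂ = 1 := (hsym h u₂).trans h2h
    have hh3 : B h u₃ = 1 := (hsym h u₃).trans h3h
    have hva := hXa v hv
    have h1a := hXa u₁ hu₁
    have h2a := hXa u₂ hu₂
    have h3a := hXa u₃ hu₃
    have hav : B a v = 1 := (hsym a v).trans hva
    have ha1 : B a u₁ = 1 := (hsym a u₁).trans h1a
    have ha2 : B a u₂ = 1 := (hsym a u₂).trans h2a
    have ha3 : B a u₃ = 1 := (hsym a u₃).trans h3a
    have e1' : B u₁ v = 1 := (hsym u₁ v).trans e1
    have e2' : B u₂ v = 1 := (hsym u₂ v).trans e2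
    have e3' : B u₃ v = 1 := (hsym u₃ v).trans e3
    have s12 : B u₂ u₁ = B u₁ u₂ := hsym u₂ u₁
    have s13 : B u₃ u₁ = B u₁ u₃ := hsym u₃ u₁
    have s23 : B u₃ u₂ = B u₂ u₃ := hsym u₃ u₂
    have n12 : 0 ≤ B u₁ u₂ := prod_nonneg hpol hΓ hsep (hXΓ hu₁) (hXΓ hu₂) h12
    have n13 : 0 ≤ B u₁ u₃ := prod_nonneg hpol hΓ hsep (hXΓ hu₁) (hXΓ hu₃) h13
    have n23 : 0 ≤ B u₂ u₃ := prod_nonneg hpol hΓ hsep (hXΓ hu₂) (hXΓ hu₃) h23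
    rcases le_or_gt 1 (B u₂ u₃) with hc | hc
    · -- hyperbolicity certificate w = -h + a + v + u₂ + u₃
      set w : S := -h + a + v + u₂ + u₃ with hw
      have hwh : B w h = 0 := by rw [hw, expandL]; omega
      have hwu₁ : 0 < B w u₁ := by rw [hw, expandL]; omega
      have hww : 0 ≤ B w w := by
        rw [hw, expandL, expandR, expandR, expandR, expandR, expandR]; omega
      have hne0 : w ≠ 0 := by
        intro h0; rw [h0] at hwu₁; simp at hwu₁
      exact absurd (hpol.hyperbolic w hne0 hwh) (by omega)
    · have h230 : B u₂ u₃ = 0 := by omega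
      rcases le_or_gt 1 (B u₁ u₂) with hc2 | hc2
      · -- hyperbolicity certificate w = -h + a + v + u₁ + u₂
        set w : S := -h + a + v + u₁ + u₂ with hw
        have hwh : B w h = 0 := by rw [hw, expandL]; omega
        have hwu₃ : 0 < B w u₃ := by rw [hw, expandL]; omega
        have hww : 0 ≤ B w w := by
          rw [hw, expandL, expandR, expandR, expandR, expandR, expandR]; omega
        have hne0 : w ≠ 0 := by
          intro h0; rw [h0] at hwu₃; simp at hwu₃
        exact absurd (hpol.hyperbolic w hne0 hwh) (by omega)
      · -- separating root w = -h + a + v + u₁ + u₂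
        have h120 : B u₁ u₂ = 0 := by omega
        set w : S := -h + a + v + u₁ + u₂ with hw
        have hwh : B w h = 0 := by rw [hw, expandL]; omega
        have hww : B w w = -2 := by
          rw [hw, expandL, expandR, expandR, expandR, expandR, expandR]; omega
        apply hsep
        refine ⟨w, ⟨hww, hwh⟩, u₃, hXΓ hu₃, u₁, hXΓ hu₁, ?_, ?_⟩
        · rw [hw, expandL]; omega
        · rw [hw, expandL]; omega
  · rintro ⟨v₁, m1, v₂, m2, v₃, m3, v₄, m4, q12, q13, q14, q23, q24, q34, e12, e23, e34⟩
    obtain ⟨h11, h1h⟩ := hΓ (hXΓ m1)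
    obtain ⟨h22, h2h⟩ := hΓ (hXΓ m2)
    obtain ⟨h33, h3h⟩ := hΓ (hXΓ m3)
    obtain ⟨h44, h4h⟩ := hΓ (hXΓ m4)
    have hh1 : B h v₁ = 1 := (hsym h v₁).trans h1h
    have hh2 : B h v₂ = 1 := (hsym h v₂).trans h2h
    have hh3 : B h v₃ = 1 := (hsym h v₃).trans h3h
    have hh4 : B h v₄ = 1 := (hsym h v₄).trans h4h
    have h1a := hXa v₁ m1
    have h2a := hXa v₂ m2
    have h3a := hXa v₃ m3
    have h4a := hXa v₄ m4
    have ha1 : B a v₁ = 1 := (hsym a v₁).trans h1a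
    have ha2 : B a v₂ = 1 := (hsym a v₂).trans h2a
    have ha3 : B a v₃ = 1 := (hsym a v₃).trans h3a
    have ha4 : B a v₄ = 1 := (hsym a v₄).trans h4a
    have e12' : B v₂ v₁ = 1 := (hsym v₂ v₁).trans e12
    have e23' : B v₃ v₂ = 1 := (hsym v₃ v₂).trans e23
    have e34' : B v₄ v₃ = 1 := (hsym v₄ v₃).trans e34
    have s13 : B v₃ v₁ = B v₁ v₃ := hsym v₃ v₁
    have s14 : B v₄ v₁ = B v₁ v₄ := hsym v₄ v₁
    have s24 : B v₄ v₂ = B v₂ v₄ := hsym v₄ v₂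
    have n13 : 0 ≤ B v₁ v₃ := prod_nonneg hpol hΓ hsep (hXΓ m1) (hXΓ m3) q13
    have n14 : 0 ≤ B v₁ v₄ := prod_nonneg hpol hΓ hsep (hXΓ m1) (hXΓ m4) q14
    have n24 : 0 ≤ B v₂ v₄ := prod_nonneg hpol hΓ hsep (hXΓ m2) (hXΓ m4) q24
    set w : S := -h + a + v₁ + v₂ + v₃ with hw
    have hwh : B w h = 0 := by rw [hw, expandL]; omega
    have hwv₄ : 0 < B w v₄ := by rw [hw, expandL]; omega
    rcases le_or_gt 1 (B v₁ v₃) with hc | hc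
    · have hww : 0 ≤ B w w := by
        rw [hw, expandL, expandR, expandR, expandR, expandR, expandR]; omega
      have hne0 : w ≠ 0 := by
        intro h0; rw [h0] at hwv₄; simp at hwv₄
      exact absurd (hpol.hyperbolic w hne0 hwh) (by omega)
    · have h130 : B v₁ v₃ = 0 := by omega
      have hww : B w w = -2 := by
        rw [hw, expandL, expandR, expandR, expandR, expandR, expandR]; omega
      apply hsep
      refine ⟨w, ⟨hww, hwh⟩, v₄, hXΓ m4, v₁, hXΓ m1, hwv₄, ?_⟩
      rw [hw, expandL]; omega

end Aux

/-- Lemma 3.2. In an admissible 4-polarized lattice, for a set of lines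
`Γ` with no separating roots and a triangle `c₁,c₂,c₃ ∈ Γ`, each set of simple sections
`sec_i` is a triangular set: all its connected components are single vertices, single
edges, paths on three vertices, or 3-cycles. -/
theorem sec_is_triangular_set
    {S : Type*} [AddCommGroup S] [Module ℤ S]
    (B : S →ₗ[ℤ] S →ₗ[ℤ] ℤ) (h : S)
    (hpol : IsPolarized B h) (hadm : IsAdmissible B h)
    (Γ : Set S) (hΓ : Γ ⊆ root1 B h)
    (hsep : NoSeparatingRoots B h Γ)
    (c₁ c₂ c₃ : S) (htri : IsTriangle B Γ c₁ c₂ c₃) :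
    IsTriangularSet B (sec B Γ c₁ c₂ c₃) ∧
    IsTriangularSet B (sec B Γ c₂ c₁ c₃) ∧
    IsTriangularSet B (sec B Γ c₃ c₁ c₂) := by
  obtain ⟨m1, m2, m3, d12, d13, d23, p12, p13, p23⟩ := htri
  obtain ⟨h11, h1h⟩ := hΓ m1
  obtain ⟨h22, h2h⟩ := hΓ m2
  obtain ⟨h33, h3h⟩ := hΓ m3
  refine ⟨?_, ?_, ?_⟩
  · exact triangular_aux hpol hΓ hsep h11 h1h
      (fun l hl => hl.1) (fun l hl => hl.2.1)
  · exact triangular_aux hpol hΓ hsep h22 h2h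
      (fun l hl => hl.1) (fun l hl => hl.2.1)
  · exact triangular_aux hpol hΓ hsep h33 h3h
      (fun l hl => hl.1) (fun l hl => hl.2.1)


end K3
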